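/- There exist real numbers a' and b' with a' < b' such that for every a < a' and every b > b' the following hold: (1) for all x, x' in S, if f(x) < f(x') then P(x,a,b) > P(x',a,b); (2) 0 < P(x,a,b) < 1 for every x in S; (3) the set S*(a,b) = {x in S : P(x,a,b) ≥ P(x',a,b) for all x' in S} is nonempty and is contained in the set S* = {x in S : f(x) ≤ f(x') for all x' in S} of global minimizers of f. -/

import Mathlib

open MeasureTheory

/-- Expected objective value `f(x) = E[H(x)]`. -/
noncomputable def srF {S : Type*} {Ω : Type*} [MeasurableSpace Ω] (ℙ : Measure Ω)
    (H : S → Ω → ℝ) (x : S) : ℝ :=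
  ∫ ω, H x ω ∂ℙ

/-- Stochastic-ruler success probability
`P(x,a,b) = E[min(max((b − H(x))/(b − a), 0), 1)] = ℙ(H(x) ≤ θ)` for `θ ~ U[a,b]`. -/
noncomputable def srP {S : Type*} {Ω : Type*} [MeasurableSpace Ω] (ℙ : Measure Ω)
    (H : S → Ω → ℝ) (x : S) (a b : ℝ) : ℝ :=
  ∫ ω, min (max ((b - H x ω) / (b - a)) 0) 1 ∂ℙ


lemma sr_clamp_bound (a b t : ℝ) (ha : a < 0) (hb : 0 < b) :
    |min (max ((b - t) / (b - a)) 0) 1 - (b - t) / (b - a)| ≤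
      t ^ 2 * ((1 / b + 1 / (-a)) / (b - a)) := by
  have hd : (0:ℝ) < b - a := by linarith
  have hna : (0:ℝ) < -a := by linarith
  have hRnn : 0 ≤ t ^ 2 * ((1 / b + 1 / (-a)) / (b - a)) := by
    apply mul_nonneg (sq_nonneg t)
    apply div_nonneg _ hd.le
    have h1 : 0 ≤ 1 / b := by positivity
    have h2 : 0 ≤ 1 / (-a) := by positivity
    linarith
  rcases le_or_gt t a with h1 | h1
  · have hu : (1:ℝ) ≤ (b - t) / (b - a) := by rw [le_div_iff₀ hd]; linarith
    rw [max_eq_left (by linarith : (0:ℝ) ≤ (b - t) / (b - a)), min_eq_right hu,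
      abs_sub_comm, abs_of_nonneg (by linarith)]
    have e0 : (b - t) / (b - a) - 1 = (a - t) / (b - a) := by field_simp; ring
    rw [e0, mul_div_assoc' , div_le_div_iff₀ hd hd]
    have e1 : (-t) * (-a) ≤ t ^ 2 := by nlinarith
    have e2 : 0 ≤ t ^ 2 / b := by positivity
    have e3 : -t ≤ t ^ 2 / (-a) := by rw [le_div_iff₀ hna]; nlinarith
    have : t ^ 2 * (1 / b + 1 / (-a)) = t ^ 2 / b + t ^ 2 / (-a) := by ring
    nlinarith [mul_le_mul_of_nonneg_right (show a - t ≤ t^2/b + t^2/(-a) by linarith) hd.le]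
  · rcases le_or_gt b t with h2 | h2
    · have hu : (b - t) / (b - a) ≤ 0 := by
        apply div_nonpos_of_nonpos_of_nonneg (by linarith) hd.le
      rw [max_eq_right hu, min_eq_left (by norm_num : (0:ℝ) ≤ 1),
        abs_of_nonneg (by linarith), zero_sub]
      have eneg : -((b - t) / (b - a)) = (t - b) / (b - a) := by ring
      rw [eneg, mul_div_assoc', div_le_div_iff₀ hd hd]
      have e3 : t - b ≤ t ^ 2 / b := by
        rw [le_div_iff₀ hb]; nlinarith
      have e2 : 0 ≤ t ^ 2 / (-a) := div_nonneg (sq_nonneg t) hna.le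
      have : t ^ 2 * (1 / b + 1 / (-a)) = t ^ 2 / b + t ^ 2 / (-a) := by ring
      nlinarith [mul_le_mul_of_nonneg_right (show t - b ≤ t^2/b + t^2/(-a) by linarith) hd.le]
    · have hu0 : (0:ℝ) ≤ (b - t) / (b - a) := div_nonneg (by linarith) hd.le
      have hu1 : (b - t) / (b - a) ≤ 1 := by rw [div_le_one hd]; linarith
      rw [max_eq_left hu0, min_eq_left hu1, sub_self, abs_zero]
      exact hRnn

lemma sr_key {Ω : Type*} [MeasurableSpace Ω] (ℙ : Measure Ω) [IsProbabilityMeasure ℙ]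
    (h : Ω → ℝ) (hm : Measurable h) (h2 : Integrable (fun ω => h ω ^ 2) ℙ)
    (a b : ℝ) (ha : a < 0) (hb : 0 < b) :
    |(∫ ω, min (max ((b - h ω) / (b - a)) 0) 1 ∂ℙ) - (b - ∫ ω, h ω ∂ℙ) / (b - a)| ≤
      (∫ ω, h ω ^ 2 ∂ℙ) * ((1 / b + 1 / (-a)) / (b - a)) := by
  have hd : (0:ℝ) < b - a := by linarith
  have hH : Integrable h ℙ := by
    refine Integrable.mono' (h2.add (integrable_const 1)) hm.aestronglyMeasurable
      (ae_of_all _ fun ω => ?_)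
    simp only [Pi.add_apply, Real.norm_eq_abs]
    nlinarith [sq_nonneg (|h ω| - 1), abs_nonneg (h ω), sq_abs (h ω)]
  have hψm : Measurable fun ω => min (max ((b - h ω) / (b - a)) 0) 1 :=
    (((measurable_const.sub hm).div_const _).max measurable_const).min measurable_const
  have hψ : Integrable (fun ω => min (max ((b - h ω) / (b - a)) 0) 1) ℙ := by
    refine Integrable.mono' (integrable_const 1) hψm.aestronglyMeasurable
      (ae_of_all _ fun ω => ?_)
    rw [Real.norm_eq_abs, abs_of_nonneg (le_min (le_max_right _ _) zero_le_one)]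
    exact min_le_right _ _
  have hlin : Integrable (fun ω => (b - h ω) / (b - a)) ℙ :=
    ((integrable_const b).sub hH).div_const _
  have hbnd : Integrable (fun ω => h ω ^ 2 * ((1 / b + 1 / (-a)) / (b - a))) ℙ :=
    h2.mul_const _
  have hpt : ∀ ω, |min (max ((b - h ω) / (b - a)) 0) 1 - (b - h ω) / (b - a)| ≤
      h ω ^ 2 * ((1 / b + 1 / (-a)) / (b - a)) := fun ω => sr_clamp_bound a b (h ω) ha hb
  have hlin_eq : (∫ ω, (b - h ω) / (b - a) ∂ℙ) = (b - ∫ ω, h ω ∂ℙ) / (b - a) := by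
    rw [integral_div, integral_sub (integrable_const b) hH, integral_const]
    simp
  have hbnd_eq : (∫ ω, h ω ^ 2 * ((1 / b + 1 / (-a)) / (b - a)) ∂ℙ) =
      (∫ ω, h ω ^ 2 ∂ℙ) * ((1 / b + 1 / (-a)) / (b - a)) := integral_mul_const _ _
  rw [← hlin_eq, ← hbnd_eq]
  rw [abs_le]
  constructor
  · have := integral_mono (hlin.sub hbnd) hψ (fun ω => by
      simp only [Pi.sub_apply]; linarith [(abs_le.mp (hpt ω)).1])
    simp only [Pi.sub_apply] at this
    rw [integral_sub hlin hbnd] at this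
    linarith
  · have := integral_mono hψ (hlin.add hbnd) (fun ω => by
      simp only [Pi.add_apply]; linarith [(abs_le.mp (hpt ω)).2])
    simp only [Pi.add_apply] at this
    rw [integral_add hlin hbnd] at this
    linarith


/-- Theorem 3.1 of Yan and Mukai (1992): there exist `a' < b'` such that for all
`a < a'` and `b > b'`, the ruler probability `P(·,a,b)` reverses the order of `f`,
lies strictly between `0` and `1`, and its set of maximizers `S*(a,b)` is a nonempty
subset of the set `S*` of global minimizers of `f`. -/
theorem stochastic_ruler_correspondence
    {S : Type*} [Fintype S] [Nonempty S]
    {Ω : Type*} [MeasurableSpace Ω] (ℙ : Measure Ω) [IsProbabilityMeasure ℙ]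
    (H : S → Ω → ℝ) (hmeas : ∀ x, Measurable (H x))
    (hL2 : ∀ x, Integrable (fun ω => (H x ω) ^ 2) ℙ) :
    ∃ a' b' : ℝ, a' < b' ∧ ∀ a < a', ∀ b > b',
      (∀ x x' : S, srF ℙ H x < srF ℙ H x' → srP ℙ H x' a b < srP ℙ H x a b) ∧
      (∀ x : S, 0 < srP ℙ H x a b ∧ srP ℙ H x a b < 1) ∧
      ({x : S | ∀ x' : S, srP ℙ H x' a b ≤ srP ℙ H x a b}.Nonempty ∧
        {x : S | ∀ x' : S, srP ℙ H x' a b ≤ srP ℙ H x a b} ⊆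
          {x : S | ∀ x' : S, srF ℙ H x ≤ srF ℙ H x'}) := by
  classical
  set f : S → ℝ := srF ℙ H with hf
  set M : ℝ := ∑ x : S, ∫ ω, H x ω ^ 2 ∂ℙ with hM
  have hint_nn : ∀ x : S, 0 ≤ ∫ ω, H x ω ^ 2 ∂ℙ := fun x =>
    integral_nonneg (fun ω => sq_nonneg _)
  have hM0 : 0 ≤ M := Finset.sum_nonneg fun x _ => hint_nn x
  have hMx : ∀ x : S, (∫ ω, H x ω ^ 2 ∂ℙ) ≤ M := fun x =>
    Finset.single_le_sum (fun x _ => hint_nn x) (Finset.mem_univ x)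
  set B : ℝ := ∑ x : S, |f x| with hB
  have hB0 : 0 ≤ B := Finset.sum_nonneg fun x _ => abs_nonneg _
  have hBx : ∀ x : S, |f x| ≤ B := fun x =>
    Finset.single_le_sum (f := fun x => |f x|) (fun x _ => abs_nonneg _) (Finset.mem_univ x)
  set δ : ℝ := (Finset.univ : Finset (S × S)).inf'
      (Finset.univ_nonempty) (fun p => if f p.1 < f p.2 then f p.2 - f p.1 else 1) with hδ
  have hδ0 : 0 < δ := by
    rw [hδ, Finset.lt_inf'_iff]
    intro p _
    split
    · next hlt => linarith
    · norm_num
  have hδle : ∀ x x' : S, f x < f x' → δ ≤ f x' - f x := by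
    intro x x' hlt
    have := Finset.inf'_le (f := fun p : S × S => if f p.1 < f p.2 then f p.2 - f p.1 else 1)
      (b := (x, x')) (Finset.mem_univ _)
    rw [if_pos hlt] at this
    exact this
  set C : ℝ := 1 + B + 2 * M + 4 * M / δ with hC
  have hMδ : 0 ≤ 4 * M / δ := div_nonneg (by linarith) hδ0.le
  have hC1 : 1 ≤ C := by rw [hC]; linarith
  have hC0 : 0 < C := by linarith
  refine ⟨-C, C, by linarith, fun a ha b hb => ?_⟩
  have haneg : a < 0 := by linarith
  have hbpos : 0 < b := by linarith
  have hd : 0 < b - a := by linarith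
  -- error bound
  set E : ℝ := 2 * M / C with hE
  have hE0 : 0 ≤ E := div_nonneg (by linarith) hC0.le
  have hEM : E ≤ 2 * M := div_le_self (by linarith) hC1
  have hkey : ∀ x : S, |srP ℙ H x a b - (b - f x) / (b - a)| ≤ E / (b - a) := by
    intro x
    refine le_trans (sr_key ℙ (H x) (hmeas x) (hL2 x) a b haneg hbpos) ?_
    rw [hE, div_div]
    have h1b : 1 / b ≤ 1 / C := one_div_le_one_div_of_le hC0 hb.le
    have h1a : 1 / (-a) ≤ 1 / C := one_div_le_one_div_of_le hC0 (by linarith)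
    have hsum : 1 / b + 1 / (-a) ≤ 2 / C := by
      have : (2:ℝ) / C = 1 / C + 1 / C := by ring
      rw [this]; linarith
    calc (∫ ω, H x ω ^ 2 ∂ℙ) * ((1 / b + 1 / (-a)) / (b - a))
        ≤ M * ((2 / C) / (b - a)) := by
          apply mul_le_mul (hMx x) _ _ hM0
          · exact div_le_div_of_nonneg_right hsum hd.le -- maybe wrong name
          · apply div_nonneg _ hd.le
            have h1 : 0 ≤ 1/b := by positivity
            have h2 : 0 ≤ 1/(-a) := one_div_nonneg.mpr (by linarith)
            linarith
      _ = 2 * M / (C * (b - a)) := by field_simp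
  have hfB : ∀ x : S, f x ≤ B := fun x => le_trans (le_abs_self _) (hBx x)
  have hfB2 : ∀ x : S, -B ≤ f x := fun x => by
    have := neg_abs_le (f x); linarith [hBx x]
  have hE4 : 2 * E = 4 * M / C := by rw [hE]; ring
  have h2Eδ : 2 * E < δ := by
    have h4 : 4 * M / δ < C := by rw [hC]; linarith
    have h5 : 4 * M < C * δ := (div_lt_iff₀ hδ0).mp h4
    have h6 : 4 * M / C < δ := (div_lt_iff₀ hC0).mpr (by linarith)
    linarith
  have hpart1 : ∀ x x' : S, f x < f x' → srP ℙ H x' a b < srP ℙ H x a b := by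
    intro x x' hlt
    have h1 := abs_le.mp (hkey x)
    have h2 := abs_le.mp (hkey x')
    have hgap := hδle x x' hlt
    have hnum : b - f x' + E < b - f x - E := by linarith
    have hmid : (b - f x' + E) / (b - a) < (b - f x - E) / (b - a) :=
      div_lt_div_of_pos_right hnum hd
    have e1 : (b - f x' + E) / (b - a) = (b - f x') / (b - a) + E / (b - a) := by ring
    have e2 : (b - f x - E) / (b - a) = (b - f x) / (b - a) - E / (b - a) := by ring
    rw [e1, e2] at hmid
    linarith
  have hpart2 : ∀ x : S, 0 < srP ℙ H x a b ∧ srP ℙ H x a b < 1 := by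
    intro x
    have h1 := abs_le.mp (hkey x)
    constructor
    · have hnum : 0 < b - f x - E := by
        have := hfB x; rw [hC] at hb; linarith
      have hpos : 0 < (b - f x - E) / (b - a) := div_pos hnum hd
      have e2 : (b - f x - E) / (b - a) = (b - f x) / (b - a) - E / (b - a) := by ring
      rw [e2] at hpos
      linarith
    · have hnum : b - f x + E < b - a := by
        have := hfB2 x; rw [hC] at ha; linarith
      have hlt1 : (b - f x + E) / (b - a) < 1 := (div_lt_one hd).mpr hnum
      have e1 : (b - f x + E) / (b - a) = (b - f x) / (b - a) + E / (b - a) := by ring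
      rw [e1] at hlt1
      linarith
  refine ⟨hpart1, hpart2, ?_, ?_⟩
  · obtain ⟨x, -, hx⟩ := Finset.exists_max_image Finset.univ
      (fun x => srP ℙ H x a b) Finset.univ_nonempty
    exact ⟨x, fun x' => hx x' (Finset.mem_univ _)⟩
  · intro x hx x'
    by_contra hcon
    push_neg at hcon
    exact absurd (hx x') (not_le.mpr (hpart1 x' x hcon))
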